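/- Let X be a measurable space, M_f a class of finite nonzero measures on X, and Φ : Ω → Measure(X) a point process whose intensity measure Λ (defined by Λ(B) = E[Φ(B)]) lies in M_f. Let ℱ = {Q / Q(X) : Q ∈ M_f} and let S' : ℱ × X → ℝ be a measurable strictly consistent scoring function for the identity on ℱ with S'(Q*, ·) Λ-integrable for all Q ∈ M_f. Let b : [0, ∞) × [0, ∞) → ℝ be a strictly consistent Bregman function, i.e. b(x, m) = −f(x) − f'(x)(m − x) for a strictly convex f with subgradient f'. Fix c > 0 and define S(Q, φ) = ∫_X S'(Q / Q(X), x) dφ(x) + c · b(Q(X), φ(X)). Then, assuming E[Φ(X)] and the relevant expectations are finite, for every Q ∈ M_f one has E[S(Q, Φ)] ≥ E[S(Λ, Φ)], with equality if and only if Q = Λ; i.e. S is a strictly consistent scoring function for the (unnormalized) intensity measure. -/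

import Mathlib

open MeasureTheory
open scoped ENNReal

lemma campbell_aux {Ω X : Type*} [MeasurableSpace Ω] [MeasurableSpace X]
    (μ : Measure Ω) (Φ : Ω → Measure X) (hΦ : Measurable Φ)
    (Λ : Measure X) (hbind : Λ = μ.bind Φ)
    (g : X → ℝ) (hg : Measurable g) (hgi : Integrable g Λ) :
    Integrable (fun ω => ∫ x, g x ∂(Φ ω)) μ ∧
      ∫ ω, (∫ x, g x ∂(Φ ω)) ∂μ = ∫ x, g x ∂Λ := by
  set A : Ω → ℝ≥0∞ := fun ω => ∫⁻ x, ENNReal.ofReal (g x) ∂(Φ ω) with hA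
  set B : Ω → ℝ≥0∞ := fun ω => ∫⁻ x, ENNReal.ofReal (-g x) ∂(Φ ω) with hB
  have hgp : Measurable fun x => ENNReal.ofReal (g x) := hg.ennreal_ofReal
  have hgn : Measurable fun x => ENNReal.ofReal (-g x) := hg.neg.ennreal_ofReal
  have hAm : Measurable A := (Measure.measurable_lintegral hgp).comp hΦ
  have hBm : Measurable B := (Measure.measurable_lintegral hgn).comp hΦ
  have hAint : ∫⁻ ω, A ω ∂μ = ∫⁻ x, ENNReal.ofReal (g x) ∂Λ := by
    rw [hbind, Measure.lintegral_bind hΦ.aemeasurable hgp.aemeasurable]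
  have hBint : ∫⁻ ω, B ω ∂μ = ∫⁻ x, ENNReal.ofReal (-g x) ∂Λ := by
    rw [hbind, Measure.lintegral_bind hΦ.aemeasurable hgn.aemeasurable]
  have hAfin : ∫⁻ ω, A ω ∂μ ≠ ⊤ := by
    rw [hAint]
    exact ne_top_of_le_ne_top hgi.2.ne (lintegral_mono fun x => ENNReal.ofReal_le_ofReal (le_abs_self _) |>.trans (by rw [← Real.norm_eq_abs, ofReal_norm]))
  have hBfin : ∫⁻ ω, B ω ∂μ ≠ ⊤ := by
    rw [hBint]
    exact ne_top_of_le_ne_top hgi.2.ne (lintegral_mono fun x => ENNReal.ofReal_le_ofReal ((neg_le_abs _)) |>.trans (by rw [← Real.norm_eq_abs, ofReal_norm]))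
  have hAae : ∀ᵐ ω ∂μ, A ω < ⊤ := ae_lt_top hAm hAfin
  have hBae : ∀ᵐ ω ∂μ, B ω < ⊤ := ae_lt_top hBm hBfin
  have hAi : Integrable (fun ω => (A ω).toReal) μ :=
    integrable_toReal_of_lintegral_ne_top hAm.aemeasurable hAfin
  have hBi : Integrable (fun ω => (B ω).toReal) μ :=
    integrable_toReal_of_lintegral_ne_top hBm.aemeasurable hBfin
  have hcongr : (fun ω => (A ω).toReal - (B ω).toReal) =ᵐ[μ] fun ω => ∫ x, g x ∂(Φ ω) := by
    filter_upwards [hAae, hBae] with ω hA' hB'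
    have hgiω : Integrable g (Φ ω) := by
      refine ⟨hg.aestronglyMeasurable, ?_⟩
      have : ∫⁻ x, ‖g x‖₊ ∂(Φ ω) ≤ A ω + B ω := by
        rw [← lintegral_add_left (by exact hgp)]
        refine lintegral_mono fun x => ?_
        rw [← enorm_eq_nnnorm, ← ofReal_norm, Real.norm_eq_abs]
        rcases le_total 0 (g x) with h | h
        · rw [abs_of_nonneg h]; exact le_self_add
        · rw [abs_of_nonpos h]; exact le_add_self
      exact lt_of_le_of_lt this (ENNReal.add_lt_top.2 ⟨hA', hB'⟩)
    rw [integral_eq_lintegral_pos_part_sub_lintegral_neg_part hgiω]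
  have hInt : Integrable (fun ω => ∫ x, g x ∂(Φ ω)) μ := (hAi.sub hBi).congr hcongr
  refine ⟨hInt, ?_⟩
  rw [← integral_congr_ae hcongr, integral_sub hAi hBi,
    integral_toReal hAm.aemeasurable hAae, integral_toReal hBm.aemeasurable hBae,
    hAint, hBint, integral_eq_lintegral_pos_part_sub_lintegral_neg_part hgi]

/-- **Strictly consistent scoring for the (unnormalized) intensity measure.**
Combining a strictly consistent score `S'` for the normalized intensity with a
strictly consistent Bregman function `b` for the expected total number of
points yields, for any `c > 0`, a strictly consistent scoring function
`S(Q, φ) = ∫ S'(Q*, x) dφ(x) + c · b(Q(X), φ(X))` for the intensity measure. -/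
theorem intensity_score_strictly_consistent
    {Ω X : Type*} [MeasurableSpace Ω] [MeasurableSpace X]
    (μ : Measure Ω) [IsProbabilityMeasure μ]
    (Φ : Ω → Measure X)
    (hΦmeas : ∀ B : Set X, MeasurableSet B → Measurable fun ω => Φ ω B)
    (Mf : Set (Measure X))
    (hMfFin : ∀ Q ∈ Mf, IsFiniteMeasure Q) (hMfNe : ∀ Q ∈ Mf, Q ≠ 0)
    (Λ : Measure X) (hΛMf : Λ ∈ Mf)
    (hΛ : ∀ B : Set X, MeasurableSet B → Λ B = ∫⁻ ω, Φ ω B ∂μ)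
    -- `E[Φ(X)]` finite
    (hfirstMoment : ∫⁻ ω, Φ ω Set.univ ∂μ < ⊤)
    -- the class of normalized measures and the score `S'` on it
    (𝓕 : Set (Measure X)) (h𝓕 : 𝓕 = (fun Q => (Q Set.univ)⁻¹ • Q) '' Mf)
    (S' : Measure X → X → ℝ)
    (hS'meas : ∀ Q ∈ 𝓕, Measurable (S' Q))
    (hS'int : ∀ Q ∈ 𝓕, Integrable (S' Q) Λ)
    (hS' : ∀ P ∈ 𝓕, ∀ Q ∈ 𝓕,
      (∫ x, S' P x ∂P ≤ ∫ x, S' Q x ∂P) ∧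
      (∫ x, S' Q x ∂P = ∫ x, S' P x ∂P → Q = P))
    -- a strictly consistent Bregman function `b` on `[0, ∞)`
    (f f' : ℝ → ℝ) (hf : StrictConvexOn ℝ (Set.Ici 0) f)
    (hsub : ∀ x ∈ Set.Ici (0:ℝ), ∀ m ∈ Set.Ici (0:ℝ),
      f x + f' x * (m - x) ≤ f m)
    (b : ℝ → ℝ → ℝ) (hb : ∀ x m, b x m = -f x - f' x * (m - x))
    (c : ℝ) (hc : 0 < c)
    -- the combined score
    (Sc : Measure X → Measure X → ℝ)
    (hSc : ∀ Q φ, Sc Q φ = (∫ x, S' ((Q Set.univ)⁻¹ • Q) x ∂φ) +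
      c * b (Q Set.univ).toReal (φ Set.univ).toReal)
    -- the relevant expectations are finite
    (hint : ∀ Q ∈ Mf, Integrable (fun ω => Sc Q (Φ ω)) μ) :
    ∀ Q ∈ Mf,
      (∫ ω, Sc Λ (Φ ω) ∂μ ≤ ∫ ω, Sc Q (Φ ω) ∂μ) ∧
      (∫ ω, Sc Q (Φ ω) ∂μ = ∫ ω, Sc Λ (Φ ω) ∂μ ↔ Q = Λ) := by
  haveI hΛfin : IsFiniteMeasure Λ := hMfFin Λ hΛMf
  have hΦ : Measurable Φ := Measure.measurable_of_measurable_coe Φ hΦmeas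
  have hbind : Λ = μ.bind Φ := by
    ext B hB
    rw [hΛ B hB, Measure.bind_apply hB hΦ.aemeasurable]
  have hΛu_ne : Λ Set.univ ≠ 0 := fun h =>
    hMfNe Λ hΛMf (Measure.measure_univ_eq_zero.mp h)
  set lam : ℝ := (Λ Set.univ).toReal with hlamdef
  have hlampos : 0 < lam := ENNReal.toReal_pos hΛu_ne (measure_ne_top Λ _)
  set N : Ω → ℝ := fun ω => (Φ ω Set.univ).toReal with hNdef
  have hNm : Measurable fun ω => Φ ω Set.univ := hΦmeas _ MeasurableSet.univ
  have hNi : Integrable N μ :=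
    integrable_toReal_of_lintegral_ne_top hNm.aemeasurable hfirstMoment.ne
  have hNmean : ∫ ω, N ω ∂μ = lam := by
    rw [hNdef, integral_toReal hNm.aemeasurable (ae_lt_top hNm hfirstMoment.ne),
      hlamdef, hΛ _ MeasurableSet.univ]
  have hmemF : ∀ Q ∈ Mf, ((Q Set.univ)⁻¹ • Q) ∈ 𝓕 := by
    intro Q hQ; rw [h𝓕]; exact ⟨Q, hQ, rfl⟩
  -- scaling identity
  have hscale : ∀ g : X → ℝ,
      ∫ x, g x ∂Λ = lam * ∫ x, g x ∂((Λ Set.univ)⁻¹ • Λ) := by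
    intro g
    rw [integral_smul_measure, ENNReal.toReal_inv, smul_eq_mul, ← mul_assoc,
      mul_inv_cancel₀ hlampos.ne', one_mul]
  -- expectation formula
  have key : ∀ Q ∈ Mf, ∫ ω, Sc Q (Φ ω) ∂μ =
      lam * (∫ x, S' ((Q Set.univ)⁻¹ • Q) x ∂((Λ Set.univ)⁻¹ • Λ)) +
      c * (-(f (Q Set.univ).toReal) -
        f' (Q Set.univ).toReal * (lam - (Q Set.univ).toReal)) := by
    intro Q hQ
    obtain ⟨hI1, hE1⟩ := campbell_aux μ Φ hΦ Λ hbind _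
      (hS'meas _ (hmemF Q hQ)) (hS'int _ (hmemF Q hQ))
    set q : ℝ := (Q Set.univ).toReal
    have hb2 : ∀ m : ℝ, c * b q m = (c * (-(f q) + f' q * q)) - (c * f' q) * m := by
      intro m; rw [hb]; ring
    have hI2 : Integrable (fun ω => c * b q (N ω)) μ := by
      simp_rw [hb2]; exact (integrable_const _).sub (hNi.const_mul _)
    have hfun : (fun ω => Sc Q (Φ ω)) =
        fun ω => (∫ x, S' ((Q Set.univ)⁻¹ • Q) x ∂(Φ ω)) + c * b q (N ω) :=
      funext fun ω => hSc Q (Φ ω)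
    rw [hfun, integral_add hI1 hI2, hE1, hscale]
    congr 1
    simp_rw [hb2]
    rw [integral_sub (integrable_const _) (hNi.const_mul _), integral_const,
      probReal_univ, one_smul, integral_const_mul, hNmean]
    ring
  -- Bregman inequality and strictness
  have hbreg : ∀ q : ℝ, 0 ≤ q →
      -(f lam) - f' lam * (lam - lam) ≤ -(f q) - f' q * (lam - q) := by
    intro q hq
    have := hsub q hq lam hlampos.le
    simp only [sub_self, mul_zero, sub_zero]
    linarith
  have hbregstrict : ∀ q : ℝ, 0 ≤ q →
      (-(f q) - f' q * (lam - q) = -(f lam) - f' lam * (lam - lam)) → q = lam := by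
    intro q hq heq
    by_contra hne
    have heq' : f lam = f q + f' q * (lam - q) := by
      simp only [sub_self, mul_zero, sub_zero] at heq; linarith
    have hmid := hf.2 (Set.mem_Ici.mpr hq) (Set.mem_Ici.mpr hlampos.le) hne
      one_half_pos one_half_pos (by norm_num)
    simp only [smul_eq_mul] at hmid
    have hmidmem : (0:ℝ) ≤ 1/2 * q + 1/2 * lam := by positivity
    have h3 : f q + (f' q * (lam - q)) / 2 ≤ f (1/2 * q + 1/2 * lam) := by
      have h := hsub q hq (1/2 * q + 1/2 * lam) hmidmem
      calc f q + (f' q * (lam - q)) / 2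
          = f q + f' q * ((1/2 * q + 1/2 * lam) - q) := by ring
        _ ≤ f (1/2 * q + 1/2 * lam) := h
    linarith
  intro Q hQ
  haveI hQfin : IsFiniteMeasure Q := hMfFin Q hQ
  set q : ℝ := (Q Set.univ).toReal with hqdef
  have hq0 : 0 ≤ q := ENNReal.toReal_nonneg
  set IQ : ℝ := ∫ x, S' ((Q Set.univ)⁻¹ • Q) x ∂((Λ Set.univ)⁻¹ • Λ) with hIQ
  set IΛ : ℝ := ∫ x, S' ((Λ Set.univ)⁻¹ • Λ) x ∂((Λ Set.univ)⁻¹ • Λ) with hIΛ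
  have hIle : IΛ ≤ IQ := (hS' _ (hmemF Λ hΛMf) _ (hmemF Q hQ)).1
  have hBle : -(f lam) - f' lam * (lam - lam) ≤ -(f q) - f' q * (lam - q) :=
    hbreg q hq0
  have hkQ := key Q hQ
  have hkΛ := key Λ hΛMf
  constructor
  · rw [hkQ, hkΛ]
    have h1 : lam * IΛ ≤ lam * IQ :=
      mul_le_mul_of_nonneg_left hIle hlampos.le
    have h2 : c * (-(f lam) - f' lam * (lam - lam)) ≤
        c * (-(f q) - f' q * (lam - q)) :=
      mul_le_mul_of_nonneg_left hBle hc.le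
    exact add_le_add h1 h2
  constructor
  · intro hEq
    rw [hkQ, hkΛ, ← hIQ, ← hIΛ, ← hqdef, ← hlamdef] at hEq
    have hIeq : IQ = IΛ := by
      have h2 : c * (-(f lam) - f' lam * (lam - lam)) ≤
          c * (-(f q) - f' q * (lam - q)) :=
        mul_le_mul_of_nonneg_left hBle hc.le
      have : lam * IQ = lam * IΛ := by linarith [mul_le_mul_of_nonneg_left hIle hlampos.le]
      exact mul_left_cancel₀ hlampos.ne' this
    have hBeq : -(f q) - f' q * (lam - q) = -(f lam) - f' lam * (lam - lam) := by
      rw [hIeq] at hEq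
      exact mul_left_cancel₀ hc.ne' (by linarith)
    have hqlam : q = lam := hbregstrict q hq0 hBeq
    have hnorm : (Q Set.univ)⁻¹ • Q = (Λ Set.univ)⁻¹ • Λ :=
      (hS' _ (hmemF Λ hΛMf) _ (hmemF Q hQ)).2 (by rw [← hIQ, ← hIΛ, hIeq])
    have hQu : Q Set.univ = Λ Set.univ :=
      (ENNReal.toReal_eq_toReal_iff' (measure_ne_top Q _) (measure_ne_top Λ _)).mp hqlam
    have hQu_ne : Q Set.univ ≠ 0 := fun h =>
      hMfNe Q hQ (Measure.measure_univ_eq_zero.mp h)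
    calc Q = (Q Set.univ) • ((Q Set.univ)⁻¹ • Q) := by
            rw [smul_smul, ENNReal.mul_inv_cancel hQu_ne (measure_ne_top Q _), one_smul]
      _ = (Λ Set.univ) • ((Λ Set.univ)⁻¹ • Λ) := by rw [hnorm, hQu]
      _ = Λ := by
            rw [smul_smul, ENNReal.mul_inv_cancel hΛu_ne (measure_ne_top Λ _), one_smul]
  · rintro rfl; rfl
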